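/- For n ≥ 2 with m = n − 1, the total number of proper partitions of the Mycielskian M(St_n) equals 2·Σ_{k=0}^{m} C(m,k)·B(2m − k) + Σ_{i=0}^{m} Σ_{j=0}^{m} C(m,i)·C(m,j)·B(2m − i − j), where B denotes the classical Bell number. -/

import Mathlib

/-- Vertices of the Mycielskian of the star: center `c`, leaves `v i`, copies `c'`, `v' i`,
and apex `u` (here `m` is the number of leaves). -/
inductive MycStarVertex (m : ℕ)
  | c : MycStarVertex m
  | v : Fin m → MycStarVertex m
  | c' : MycStarVertex m
  | v' : Fin m → MycStarVertex m
  | u : MycStarVertex m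
  deriving DecidableEq, Fintype

/-- The Mycielskian of the star with `m` leaves: edges `c ~ v i`, `c ~ v' i`, `c' ~ v i`,
`u ~ v' i`, and `c' ~ u`. -/
def mycStar (m : ℕ) : SimpleGraph (MycStarVertex m) :=
  SimpleGraph.fromRel (fun x y =>
    match x, y with
    | .c, .v _ => True
    | .c, .v' _ => True
    | .c', .v _ => True
    | .u, .v' _ => True
    | .c', .u => True
    | _, _ => False)

/-- Stirling numbers of the second kind. -/
def stirling : ℕ → ℕ → ℕ
  | 0, 0 => 1
  | 0, _ + 1 => 0
  | _ + 1, 0 => 0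
  | n + 1, k + 1 => (k + 1) * stirling n (k + 1) + stirling n k

/-- The classical Bell numbers. -/
def bell (n : ℕ) : ℕ := ∑ k ∈ Finset.range (n + 1), stirling n k

lemma stirling_zero_succ (k : ℕ) : stirling 0 (k+1) = 0 := rfl
lemma stirling_succ_zero (n : ℕ) : stirling (n+1) 0 = 0 := rfl
lemma stirling_succ_succ (n k : ℕ) :
    stirling (n+1) (k+1) = (k + 1) * stirling n (k + 1) + stirling n k := rfl

lemma stirling_eq_zero : ∀ {n k : ℕ}, n < k → stirling n k = 0
  | 0, _+1, _ => rfl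
  | n+1, k+1, h => by
      have h1 : n < k + 1 := by omega
      have h2 : n < k := by omega
      simp [stirling_succ_succ, stirling_eq_zero h1, stirling_eq_zero h2]

open Finset in
lemma stirling_id : ∀ (n k : ℕ),
    stirling (n+1) (k+1) = ∑ j ∈ range (n+1), n.choose j * stirling j k
  | 0, k => by simp [stirling_succ_succ, stirling_zero_succ]
  | n+1, k => by
      have key : ∀ k', ∑ j ∈ range (n+1), n.choose j * stirling (j+1) k'
          = k' * stirling (n+1) (k'+1) + stirling (n+1) k' := by
        intro k'
        match k' with
        | 0 => simp [stirling_succ_zero]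
        | k''+1 =>
          have : ∀ j ∈ range (n+1), n.choose j * stirling (j+1) (k''+1)
              = (k''+1) * (n.choose j * stirling j (k''+1)) + n.choose j * stirling j k'' := by
            intro j _; rw [stirling_succ_succ]; ring
          rw [Finset.sum_congr rfl this, Finset.sum_add_distrib, ← Finset.mul_sum,
            ← stirling_id n (k''+1), ← stirling_id n k'', stirling_succ_succ]
      have h1 : ∀ j ∈ range (n+1), (n+1).choose (j+1) * stirling (j+1) k
          = n.choose j * stirling (j+1) k + n.choose (j+1) * stirling (j+1) k := by
        intro j _; rw [Nat.choose_succ_succ, Nat.add_mul]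
      have h2 : ∑ j ∈ range (n+2), n.choose j * stirling j k
          = ∑ j ∈ range (n+1), n.choose (j+1) * stirling (j+1) k
            + (n+1).choose 0 * stirling 0 k := by
        rw [Finset.sum_range_succ' _ (n+1)]; simp
      have h3 : stirling (n+1) (k+1) = ∑ j ∈ range (n+2), n.choose j * stirling j k := by
        rw [Finset.sum_range_succ, Nat.choose_succ_self, stirling_id n k]; simp
      calc stirling (n+2) (k+1)
          = (k * stirling (n+1) (k+1) + stirling (n+1) k) + stirling (n+1) (k+1) := by
            rw [stirling_succ_succ]; ring
        _ = (∑ j ∈ range (n+1), n.choose j * stirling (j+1) k) + stirling (n+1) (k+1) := by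
            rw [key]
        _ = (∑ j ∈ range (n+1), n.choose j * stirling (j+1) k)
            + (∑ j ∈ range (n+1), n.choose (j+1) * stirling (j+1) k
                + (n+1).choose 0 * stirling 0 k) := by rw [h3, h2]
        _ = (∑ j ∈ range (n+1), (n+1).choose (j+1) * stirling (j+1) k)
            + (n+1).choose 0 * stirling 0 k := by
            rw [Finset.sum_congr rfl h1, Finset.sum_add_distrib]; ring
        _ = ∑ j ∈ range (n+2), (n+1).choose j * stirling j k :=
            (Finset.sum_range_succ' (fun j => (n+1).choose j * stirling j k) (n+1)).symm

open Finset in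
lemma bell_succ (n : ℕ) : bell (n+1) = ∑ j ∈ range (n+1), n.choose j * bell j := by
  have h : ∀ j ∈ range (n+1), n.choose j * bell j
      = n.choose j * ∑ k ∈ range (n+1), stirling j k := by
    intro j hj
    rw [mem_range] at hj
    congr 1
    rw [bell]
    refine Finset.sum_subset (fun x hx => ?_) (fun x _ hx => ?_)
    · rw [mem_range] at *; omega
    · rw [mem_range] at hx; exact stirling_eq_zero (by omega)
  rw [Finset.sum_congr rfl h]
  simp_rw [Finset.mul_sum]
  rw [Finset.sum_comm, bell, Finset.sum_range_succ' _ (n+1)]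
  simp only [stirling_succ_zero, mul_zero, add_zero]
  exact Finset.sum_congr rfl fun k _ => stirling_id n k

open Finset in
lemma bell_succ' (n : ℕ) : bell (n+1) = ∑ k ∈ range (n+1), n.choose k * bell (n - k) := by
  rw [bell_succ, ← Finset.sum_range_reflect]
  refine Finset.sum_congr rfl fun j hj => ?_
  rw [mem_range] at hj
  have h1 : n + 1 - 1 - j = n - j := by omega
  rw [h1, Nat.choose_symm (by omega)]

section Split
open Finset

variable {α : Type*} [DecidableEq α] {a : α} {s : Finset α}

lemma parts_avoid_of_mem {b : Finset α} (P : Finpartition s) (hb : b ∈ P.parts) :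
    (P.avoid b).parts = P.parts.erase b := by
  ext c
  simp only [Finpartition.mem_avoid, mem_erase]
  constructor
  · rintro ⟨d, hd, hdb, rfl⟩
    have hne : d ≠ b := by rintro rfl; exact hdb le_rfl
    have hdisj : Disjoint d b := P.disjoint hd hb hne
    rw [hdisj.sdiff_eq_left]
    exact ⟨hne, hd⟩
  · rintro ⟨hne, hc⟩
    have hdisj : Disjoint c b := P.disjoint hc hb hne
    exact ⟨c, hc, fun hle => P.ne_bot hc (hdisj.eq_bot_of_le hle), hdisj.sdiff_eq_left⟩

lemma sigma_fp_ext {x y : Σ t : ↥s.powerset, Finpartition (s \ (t : Finset α))}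
    (h1 : (x.1 : Finset α) = y.1) (h2 : x.2.parts = y.2.parts) : x = y := by
  obtain ⟨⟨t, ht⟩, P⟩ := x
  obtain ⟨⟨t', ht'⟩, P'⟩ := y
  dsimp at h1
  subst h1
  dsimp at h2
  have hP : P = P' := Finpartition.ext h2
  subst hP
  rfl

def splitToFun (ha : a ∉ s) (P : Finpartition (insert a s)) :
    Σ t : ↥s.powerset, Finpartition (s \ (t : Finset α)) :=
  ⟨⟨P.part a \ {a}, mem_powerset.2 (fun x hx => by
      rcases mem_sdiff.1 hx with ⟨h1, h2⟩
      rcases mem_insert.1 (P.le (P.part_mem.2 (mem_insert_self a s)) h1) with h | h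
      · exact absurd h (by simpa using h2)
      · exact h)⟩,
    (P.avoid (P.part a)).copy (by
      have hmem : a ∈ P.part a := P.mem_part (mem_insert_self a s)
      ext x
      simp only [mem_sdiff, mem_insert, mem_singleton]
      by_cases hxa : x = a
      · subst hxa; simp [hmem, ha]
      · simp only [hxa, false_or, or_false, not_false_eq_true, and_true])⟩

lemma splitToFun_fst (ha : a ∉ s) (P : Finpartition (insert a s)) :
    ((splitToFun ha P).1 : Finset α) = P.part a \ {a} := rfl

lemma splitToFun_snd_parts (ha : a ∉ s) (P : Finpartition (insert a s)) :
    (splitToFun ha P).2.parts = P.parts.erase (P.part a) := by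
  dsimp only [splitToFun]
  rw [Finpartition.copy_parts, parts_avoid_of_mem P (P.part_mem.2 (mem_insert_self a s))]

def splitInvFun (ha : a ∉ s) (x : Σ t : ↥s.powerset, Finpartition (s \ (t : Finset α))) :
    Finpartition (insert a s) :=
  x.2.extend (b := insert a (x.1 : Finset α))
    (by simp)
    (by rw [Finset.disjoint_insert_right]
        exact ⟨fun h => ha (mem_sdiff.1 h).1, sdiff_disjoint⟩)
    (by have ht : (x.1 : Finset α) ⊆ s := mem_powerset.1 x.1.2
        rw [sup_eq_union]
        ext y
        simp only [mem_union, mem_sdiff, mem_insert]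
        constructor
        · rintro (⟨h, _⟩ | h | h)
          · exact Or.inr h
          · exact Or.inl h
          · exact Or.inr (ht h)
        · rintro (h | h)
          · exact Or.inr (Or.inl h)
          · by_cases hy : y ∈ (x.1 : Finset α)
            · exact Or.inr (Or.inr hy)
            · exact Or.inl ⟨h, hy⟩)

lemma splitInvFun_parts (ha : a ∉ s) (x : Σ t : ↥s.powerset, Finpartition (s \ (t : Finset α))) :
    (splitInvFun ha x).parts = insert (insert a (x.1 : Finset α)) x.2.parts :=
  Finpartition.extend_parts _ _ _ _

/-- Split off the part containing `a` from a finpartition of `insert a s`. -/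
def splitEquiv (ha : a ∉ s) :
    Finpartition (insert a s) ≃ Σ t : ↥s.powerset, Finpartition (s \ (t : Finset α)) where
  toFun := splitToFun ha
  invFun := splitInvFun ha
  left_inv P := by
    have hpm : P.part a ∈ P.parts := P.part_mem.2 (mem_insert_self a s)
    have hmem : a ∈ P.part a := P.mem_part (mem_insert_self a s)
    apply Finpartition.ext
    rw [splitInvFun_parts, splitToFun_snd_parts, splitToFun_fst,
      sdiff_singleton_eq_erase, insert_erase hmem, insert_erase hpm]
  right_inv x := by
    obtain ⟨⟨t, ht⟩, Q⟩ := x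
    have hts : t ⊆ s := mem_powerset.1 ht
    have hat : a ∉ t := fun h => ha (hts h)
    have hmemE : insert a t ∈ (splitInvFun ha ⟨⟨t, ht⟩, Q⟩).parts := by
      rw [splitInvFun_parts]; exact mem_insert_self _ _
    have hpart : (splitInvFun ha ⟨⟨t, ht⟩, Q⟩).part a = insert a t :=
      Finpartition.part_eq_of_mem _ hmemE (mem_insert_self a t)
    have hnotin : insert a t ∉ Q.parts := by
      intro h
      exact ha (mem_sdiff.1 (Q.le h (mem_insert_self a t))).1
    apply sigma_fp_ext
    · rw [splitToFun_fst, hpart, sdiff_singleton_eq_erase, erase_insert hat]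
    · rw [splitToFun_snd_parts, hpart, splitInvFun_parts, erase_insert hnotin]

lemma parts_eq_insert_split (ha : a ∉ s) (P : Finpartition (insert a s)) :
    P.parts = insert (insert a ((splitToFun ha P).1 : Finset α)) (splitToFun ha P).2.parts := by
  conv_lhs => rw [← (splitEquiv ha).left_inv P]
  exact splitInvFun_parts ha (splitToFun ha P)

def sigmaSubtypeEquiv {ι : Type*} {F : ι → Type*} (p : ∀ i, F i → Prop) :
    {x : Σ i, F i // p x.1 x.2} ≃ Σ i, {y : F i // p i y} where
  toFun x := ⟨x.1.1, x.1.2, x.2⟩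
  invFun x := ⟨⟨x.1, x.2.1⟩, x.2.2⟩
  left_inv x := rfl
  right_inv x := rfl

theorem card_finpartition_insert (ha : a ∉ s) :
    Nat.card (Finpartition (insert a s))
      = ∑ t ∈ s.powerset, Nat.card (Finpartition (s \ t)) := by
  classical
  rw [Nat.card_congr (splitEquiv ha), Nat.card_eq_fintype_card, Fintype.card_sigma,
    ← Finset.sum_coe_sort s.powerset (fun t => Nat.card (Finpartition (s \ t)))]
  exact Finset.sum_congr rfl fun t _ => Nat.card_eq_fintype_card.symm

theorem card_proper_insert (ha : a ∉ s) (p : Finset α → Prop) :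
    Nat.card {P : Finpartition (insert a s) // ∀ q ∈ P.parts, p q}
      = ∑ t ∈ s.powerset,
          Nat.card {Q : Finpartition (s \ t) // p (insert a t) ∧ ∀ q ∈ Q.parts, p q} := by
  classical
  have e1 := (splitEquiv ha).subtypeEquiv (p := fun P => ∀ q ∈ P.parts, p q)
    (q := fun x => p (insert a (x.1 : Finset α)) ∧ ∀ q ∈ x.2.parts, p q) (fun P => by
      show (∀ q ∈ P.parts, p q) ↔ _
      rw [parts_eq_insert_split ha P, Finset.forall_mem_insert]
      exact Iff.rfl)
  rw [Nat.card_congr (e1.trans (sigmaSubtypeEquiv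
      (F := fun t : ↥s.powerset => Finpartition (s \ (t : Finset α)))
      (fun t Q => p (insert a (t : Finset α)) ∧ ∀ q ∈ Q.parts, p q))),
    Nat.card_eq_fintype_card, Fintype.card_sigma,
    ← Finset.sum_coe_sort s.powerset
      (fun t => Nat.card {Q : Finpartition (s \ t) // p (insert a t) ∧ ∀ q ∈ Q.parts, p q})]
  exact Finset.sum_congr rfl fun t _ => Nat.card_eq_fintype_card.symm

lemma sum_powerset_card (s : Finset α) (f : ℕ → ℕ) :
    ∑ t ∈ s.powerset, f t.card = ∑ k ∈ Finset.range (s.card + 1), s.card.choose k * f k := by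
  rw [Finset.sum_powerset]
  refine Finset.sum_congr rfl fun k _ => ?_
  rw [Finset.sum_congr rfl (fun u hu => by rw [(Finset.mem_powersetCard.1 hu).2]),
    Finset.sum_const, Finset.card_powersetCard, smul_eq_mul]

lemma card_finpartition_aux :
    ∀ (n : ℕ) (s : Finset α), s.card = n → Nat.card (Finpartition s) = bell n := by
  intro n
  induction n using Nat.strong_induction_on with
  | _ n IH =>
    intro s hs
    rcases n with _ | n
    · have hse : s = ∅ := card_eq_zero.1 hs
      subst hse
      have hu : Nat.card (Finpartition (⊥ : Finset α)) = 1 := Nat.card_unique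
      rw [show (∅ : Finset α) = (⊥ : Finset α) from rfl, hu]
      decide
    · obtain ⟨a, t, hat, rfl, ht⟩ := card_eq_succ.1 hs
      rw [card_finpartition_insert hat]
      have hsum : ∑ u ∈ t.powerset, Nat.card (Finpartition (t \ u))
          = ∑ u ∈ t.powerset, bell (n - u.card) :=
        Finset.sum_congr rfl fun u hu => IH (n - u.card) (by omega) (t \ u)
          (by rw [card_sdiff_of_subset (mem_powerset.1 hu), ht])
      rw [hsum, sum_powerset_card t (fun k => bell (n - k)), ht, ← bell_succ']

lemma card_finpartition (s : Finset α) : Nat.card (Finpartition s) = bell s.card :=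
  card_finpartition_aux s.card s rfl

end Split

section Graph
open Finset MycStarVertex

variable {m : ℕ}

def Vv (m : ℕ) : Finset (MycStarVertex m) := Finset.univ.image MycStarVertex.v
def Vv' (m : ℕ) : Finset (MycStarVertex m) := Finset.univ.image MycStarVertex.v'

def ind (m : ℕ) (q : Finset (MycStarVertex m)) : Prop :=
  ∀ a ∈ q, ∀ b ∈ q, ¬ (mycStar m).Adj a b

lemma card_Vv : (Vv m).card = m := by
  rw [Vv, Finset.card_image_of_injective _ (fun a b h => by injection h), card_univ, Fintype.card_fin]

lemma card_Vv' : (Vv' m).card = m := by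
  rw [Vv', Finset.card_image_of_injective _ (fun a b h => by injection h), card_univ, Fintype.card_fin]

lemma disj_VvVv' : Disjoint (Vv m) (Vv' m) := by
  rw [Finset.disjoint_left]
  rintro x hx hx'
  simp only [Vv, Vv', mem_image, mem_univ, true_and] at hx hx'
  obtain ⟨i, rfl⟩ := hx
  obtain ⟨j, hj⟩ := hx'
  cases hj

lemma card_VV' : (Vv m ∪ Vv' m).card = 2 * m := by
  rw [Finset.card_union_of_disjoint disj_VvVv', card_Vv, card_Vv']; ring

lemma not_adj_VV' {x y : MycStarVertex m} (hx : x ∈ Vv m ∪ Vv' m) (hy : y ∈ Vv m ∪ Vv' m) :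
    ¬ (mycStar m).Adj x y := by
  simp only [mem_union, Vv, Vv', mem_image, mem_univ, true_and] at hx hy
  obtain ⟨i, rfl⟩ | ⟨i, rfl⟩ := hx <;> obtain ⟨j, rfl⟩ | ⟨j, rfl⟩ := hy <;>
    simp [mycStar, SimpleGraph.fromRel_adj]

lemma proper_auto {R : Finset (MycStarVertex m)} (hR : R ⊆ Vv m ∪ Vv' m) (Q : Finpartition R) :
    ∀ q ∈ Q.parts, ind m q :=
  fun q hq a ha b hb => not_adj_VV' (hR (Q.le hq ha)) (hR (Q.le hq hb))

lemma ind_insert_c' {t : Finset (MycStarVertex m)} (hts : t ⊆ (Vv m ∪ Vv' m) ∪ {u}) :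
    ind m (insert c' t) ↔ t ⊆ Vv' m := by
  constructor
  · intro h x hx
    have hadj : ∀ y ∈ t, (mycStar m).Adj c' y → False := fun y hy ha =>
      h _ (mem_insert_self _ _) _ (mem_insert_of_mem hy) ha
    rcases mem_union.1 (hts hx) with hx' | hx'
    · rcases mem_union.1 hx' with h1 | h1
      · obtain ⟨i, _, rfl⟩ := mem_image.1 h1
        exact (hadj _ hx (by simp [mycStar, SimpleGraph.fromRel_adj])).elim
      · exact h1
    · rw [mem_singleton] at hx'
      subst hx'
      exact (hadj _ hx (by simp [mycStar, SimpleGraph.fromRel_adj])).elim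
  · intro htv a ha b hb
    rcases mem_insert.1 ha with rfl | ha' <;> rcases mem_insert.1 hb with rfl | hb'
    · simp [mycStar, SimpleGraph.fromRel_adj]
    · obtain ⟨i, _, rfl⟩ := mem_image.1 (htv hb')
      simp [mycStar, SimpleGraph.fromRel_adj]
    · obtain ⟨i, _, rfl⟩ := mem_image.1 (htv ha')
      simp [mycStar, SimpleGraph.fromRel_adj]
    · exact not_adj_VV' (mem_union_right _ (htv ha')) (mem_union_right _ (htv hb'))

lemma ind_insert_u {t : Finset (MycStarVertex m)} (hts : t ⊆ Vv m ∪ Vv' m) :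
    ind m (insert u t) ↔ t ⊆ Vv m := by
  constructor
  · intro h x hx
    have hadj : ∀ y ∈ t, (mycStar m).Adj u y → False := fun y hy ha =>
      h _ (mem_insert_self _ _) _ (mem_insert_of_mem hy) ha
    rcases mem_union.1 (hts hx) with h1 | h1
    · exact h1
    · obtain ⟨i, _, rfl⟩ := mem_image.1 h1
      exact (hadj _ hx (by simp [mycStar, SimpleGraph.fromRel_adj])).elim
  · intro htv a ha b hb
    rcases mem_insert.1 ha with rfl | ha' <;> rcases mem_insert.1 hb with rfl | hb'
    · simp [mycStar, SimpleGraph.fromRel_adj]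
    · obtain ⟨i, _, rfl⟩ := mem_image.1 (htv hb')
      simp [mycStar, SimpleGraph.fromRel_adj]
    · obtain ⟨i, _, rfl⟩ := mem_image.1 (htv ha')
      simp [mycStar, SimpleGraph.fromRel_adj]
    · exact not_adj_VV' (mem_union_left _ (htv ha')) (mem_union_left _ (htv hb'))

lemma ind_insert_c {t : Finset (MycStarVertex m)} (hts : t ⊆ (Vv m ∪ Vv' m) ∪ {c', u}) :
    ind m (insert c t) ↔ t = ∅ ∨ t = {c'} ∨ t = {u} := by
  constructor
  · intro h
    have hadj : ∀ y ∈ t, (mycStar m).Adj c y → False := fun y hy ha =>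
      h _ (mem_insert_self _ _) _ (mem_insert_of_mem hy) ha
    have hsub : ∀ x ∈ t, x = c' ∨ x = u := by
      intro x hx
      rcases mem_union.1 (hts hx) with h1 | h1
      · rcases mem_union.1 h1 with h2 | h2
        · obtain ⟨i, _, rfl⟩ := mem_image.1 h2
          exact (hadj _ hx (by simp [mycStar, SimpleGraph.fromRel_adj])).elim
        · obtain ⟨i, _, rfl⟩ := mem_image.1 h2
          exact (hadj _ hx (by simp [mycStar, SimpleGraph.fromRel_adj])).elim
      · rcases mem_insert.1 h1 with h2 | h2
        · exact Or.inl h2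
        · exact Or.inr (mem_singleton.1 h2)
    by_cases hc' : c' ∈ t <;> by_cases hu : u ∈ t
    · exact (h _ (mem_insert_of_mem hc') _ (mem_insert_of_mem hu)
        (by simp [mycStar, SimpleGraph.fromRel_adj])).elim
    · refine Or.inr (Or.inl (Finset.eq_singleton_iff_unique_mem.2 ⟨hc', fun x hx => ?_⟩))
      rcases hsub x hx with rfl | rfl
      · rfl
      · exact absurd hx hu
    · refine Or.inr (Or.inr (Finset.eq_singleton_iff_unique_mem.2 ⟨hu, fun x hx => ?_⟩))
      rcases hsub x hx with rfl | rfl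
      · exact absurd hx hc'
      · rfl
    · refine Or.inl (Finset.eq_empty_iff_forall_notMem.2 fun x hx => ?_)
      rcases hsub x hx with rfl | rfl
      · exact hc' hx
      · exact hu hx
  · rintro (rfl | rfl | rfl) <;> intro a ha b hb <;>
      simp only [mem_insert, mem_singleton, Finset.notMem_empty, or_false] at ha hb
    · subst ha; subst hb; simp [mycStar, SimpleGraph.fromRel_adj]
    · rcases ha with rfl | rfl <;> rcases hb with rfl | rfl <;>
        simp [mycStar, SimpleGraph.fromRel_adj]
    · rcases ha with rfl | rfl <;> rcases hb with rfl | rfl <;>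
        simp [mycStar, SimpleGraph.fromRel_adj]

end Graph
section Main
open Finset MycStarVertex

variable {m : ℕ}

lemma huniv : (univ : Finset (MycStarVertex m)) = insert c ((Vv m ∪ Vv' m) ∪ {c', u}) := by
  ext x; cases x <;> simp [Vv, Vv']

lemma hc_not : (c : MycStarVertex m) ∉ (Vv m ∪ Vv' m) ∪ {c', u} := by simp [Vv, Vv']

lemma ground_empty :
    ((Vv m ∪ Vv' m) ∪ {c', u}) \ (∅ : Finset (MycStarVertex m))
      = insert c' ((Vv m ∪ Vv' m) ∪ {u}) := by
  rw [sdiff_empty]; ext x; cases x <;> simp [Vv, Vv']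

lemma ground_c' :
    ((Vv m ∪ Vv' m) ∪ {c', u}) \ ({c'} : Finset (MycStarVertex m))
      = insert u (Vv m ∪ Vv' m) := by
  ext x; cases x <;> simp [Vv, Vv']

lemma ground_u :
    ((Vv m ∪ Vv' m) ∪ {c', u}) \ ({u} : Finset (MycStarVertex m))
      = insert c' (Vv m ∪ Vv' m) := by
  ext x; cases x <;> simp [Vv, Vv']

lemma ground_t {t : Finset (MycStarVertex m)} (ht : t ⊆ Vv' m) :
    ((Vv m ∪ Vv' m) ∪ {u}) \ t = insert u ((Vv m ∪ Vv' m) \ t) := by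
  have hu : (u : MycStarVertex m) ∉ t := fun h => by simpa [Vv'] using ht h
  ext x
  simp only [mem_sdiff, mem_union, mem_insert, mem_singleton]
  constructor
  · rintro ⟨h1 | h1, h2⟩
    · exact Or.inr ⟨h1, h2⟩
    · exact Or.inl h1
  · rintro (rfl | ⟨h1, h2⟩)
    · exact ⟨Or.inr rfl, hu⟩
    · exact ⟨Or.inl h1, h2⟩

lemma key_card {R : Finset (MycStarVertex m)} (hR : R ⊆ Vv m ∪ Vv' m) :
    Nat.card {Q : Finpartition R // ∀ q ∈ Q.parts, ind m q} = bell R.card := by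
  rw [Nat.card_congr (Equiv.subtypeUnivEquiv (proper_auto hR)), card_finpartition]

lemma stepU {X : Finset (MycStarVertex m)} (hX : X ⊆ Vv m ∪ Vv' m) (hVX : Vv m ⊆ X) :
    Nat.card {Q : Finpartition (insert u X) // ∀ q ∈ Q.parts, ind m q}
      = ∑ t ∈ (Vv m).powerset, bell (X.card - t.card) := by
  classical
  have hu : (u : MycStarVertex m) ∉ X := fun h => by simpa [Vv, Vv'] using hX h
  rw [card_proper_insert hu (ind m)]
  rw [← Finset.sum_subset (Finset.powerset_mono.2 hVX) (fun t ht htn => ?_)]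
  · refine Finset.sum_congr rfl fun t ht => ?_
    have htV : t ⊆ Vv m := mem_powerset.1 ht
    have h1 : ind m (insert u t) := (ind_insert_u (htV.trans subset_union_left)).2 htV
    rw [Nat.card_congr (Equiv.subtypeEquivRight (fun Q => and_iff_right h1)),
      key_card (sdiff_subset.trans hX), card_sdiff_of_subset (htV.trans hVX)]
  · have h2 : ¬ ind m (insert u t) := by
      rw [ind_insert_u ((mem_powerset.1 ht).trans hX)]
      exact fun hs => htn (mem_powerset.2 hs)
    haveI : IsEmpty {Q : Finpartition (X \ t) //
        ind m (insert u t) ∧ ∀ q ∈ Q.parts, ind m q} := ⟨fun Q => h2 Q.2.1⟩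
    exact Nat.card_of_isEmpty

lemma stepC' {X : Finset (MycStarVertex m)} (hX : X ⊆ (Vv m ∪ Vv' m) ∪ {u})
    (hVX : Vv' m ⊆ X) :
    Nat.card {Q : Finpartition (insert c' X) // ∀ q ∈ Q.parts, ind m q}
      = ∑ t ∈ (Vv' m).powerset,
          Nat.card {Q : Finpartition (X \ t) // ∀ q ∈ Q.parts, ind m q} := by
  classical
  have hc' : (c' : MycStarVertex m) ∉ X := fun h => by simpa [Vv, Vv'] using hX h
  rw [card_proper_insert hc' (ind m)]
  rw [← Finset.sum_subset (Finset.powerset_mono.2 hVX) (fun t ht htn => ?_)]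
  · refine Finset.sum_congr rfl fun t ht => ?_
    have htV : t ⊆ Vv' m := mem_powerset.1 ht
    have h1 : ind m (insert c' t) :=
      (ind_insert_c' ((htV.trans subset_union_right).trans subset_union_left)).2 htV
    rw [Nat.card_congr (Equiv.subtypeEquivRight (fun Q => and_iff_right h1))]
  · have h2 : ¬ ind m (insert c' t) := by
      rw [ind_insert_c' ((mem_powerset.1 ht).trans hX)]
      exact fun hs => htn (mem_powerset.2 hs)
    haveI : IsEmpty {Q : Finpartition (X \ t) //
        ind m (insert c' t) ∧ ∀ q ∈ Q.parts, ind m q} := ⟨fun Q => h2 Q.2.1⟩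
    exact Nat.card_of_isEmpty

lemma termB :
    Nat.card {Q : Finpartition (((Vv m ∪ Vv' m) ∪ {c', u}) \ {c'}) //
        ind m (insert c {c'}) ∧ ∀ q ∈ Q.parts, ind m q}
      = ∑ k ∈ Finset.range (m+1), m.choose k * bell (2*m - k) := by
  have hp0 : ind m (insert c ({c'} : Finset (MycStarVertex m))) :=
    (ind_insert_c (by simp)).2 (Or.inr (Or.inl rfl))
  rw [ground_c', Nat.card_congr (Equiv.subtypeEquivRight (fun Q => and_iff_right hp0)),
    stepU subset_rfl subset_union_left]
  simp only [card_VV']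
  rw [sum_powerset_card (Vv m) (fun k => bell (2*m - k)), card_Vv]

lemma termC :
    Nat.card {Q : Finpartition (((Vv m ∪ Vv' m) ∪ {c', u}) \ {u}) //
        ind m (insert c {u}) ∧ ∀ q ∈ Q.parts, ind m q}
      = ∑ k ∈ Finset.range (m+1), m.choose k * bell (2*m - k) := by
  have hp0 : ind m (insert c ({u} : Finset (MycStarVertex m))) :=
    (ind_insert_c (by simp)).2 (Or.inr (Or.inr rfl))
  rw [ground_u, Nat.card_congr (Equiv.subtypeEquivRight (fun Q => and_iff_right hp0)),
    stepC' subset_union_left subset_union_right]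
  rw [Finset.sum_congr rfl (fun t ht => by
    rw [key_card sdiff_subset, card_sdiff_of_subset ((mem_powerset.1 ht).trans subset_union_right),
      card_VV'])]
  rw [sum_powerset_card (Vv' m) (fun k => bell (2*m - k)), card_Vv']

lemma termA :
    Nat.card {Q : Finpartition (((Vv m ∪ Vv' m) ∪ {c', u}) \ ∅) //
        ind m (insert c ∅) ∧ ∀ q ∈ Q.parts, ind m q}
      = ∑ i ∈ Finset.range (m+1), m.choose i *
          ∑ j ∈ Finset.range (m+1), m.choose j * bell (2*m - i - j) := by
  have hp0 : ind m (insert c (∅ : Finset (MycStarVertex m))) :=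
    (ind_insert_c (empty_subset _)).2 (Or.inl rfl)
  rw [ground_empty, Nat.card_congr (Equiv.subtypeEquivRight (fun Q => and_iff_right hp0)),
    stepC' subset_rfl (subset_union_right.trans subset_union_left)]
  have hinner : ∀ t ∈ (Vv' m).powerset,
      Nat.card {Q : Finpartition (((Vv m ∪ Vv' m) ∪ {u}) \ t) // ∀ q ∈ Q.parts, ind m q}
        = ∑ j ∈ Finset.range (m+1), m.choose j * bell (2*m - t.card - j) := by
    intro t ht
    have htV : t ⊆ Vv' m := mem_powerset.1 ht
    rw [ground_t htV, stepU sdiff_subset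
      (Finset.subset_sdiff.2 ⟨subset_union_left, disj_VvVv'.mono_right htV⟩)]
    simp only [card_sdiff_of_subset (htV.trans subset_union_right), card_VV']
    rw [sum_powerset_card (Vv m) (fun k => bell (2*m - t.card - k)), card_Vv]
  rw [Finset.sum_congr rfl hinner]
  rw [sum_powerset_card (Vv' m)
    (fun i => ∑ j ∈ Finset.range (m+1), m.choose j * bell (2*m - i - j)), card_Vv']

end Main

/-- For `n ≥ 2` with `m = n − 1`, the total number of proper partitions of the Mycielskian
`M(St_n)` equals
`2·∑_{k=0}^{m} C(m,k)·B(2m−k) + ∑_{i=0}^{m} ∑_{j=0}^{m} C(m,i)·C(m,j)·B(2m−i−j)`. -/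
theorem bell_mycStar (n m : ℕ) (hn : 2 ≤ n) (hm : m = n - 1) :
    Nat.card {P : Finpartition (Finset.univ : Finset (MycStarVertex m)) //
        ∀ p ∈ P.parts, ∀ a ∈ p, ∀ b ∈ p, ¬ (mycStar m).Adj a b} =
      2 * (∑ k ∈ Finset.range (m + 1), m.choose k * bell (2 * m - k)) +
      ∑ i ∈ Finset.range (m + 1), ∑ j ∈ Finset.range (m + 1),
        m.choose i * m.choose j * bell (2 * m - i - j) := by
  classical
  have hrw : {P : Finpartition (Finset.univ : Finset (MycStarVertex m)) //
      ∀ p ∈ P.parts, ∀ a ∈ p, ∀ b ∈ p, ¬ (mycStar m).Adj a b}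
      = {P : Finpartition (insert MycStarVertex.c
          ((Vv m ∪ Vv' m) ∪ {MycStarVertex.c', MycStarVertex.u})) //
          ∀ q ∈ P.parts, ind m q} := by rw [huniv]; rfl
  rw [hrw, card_proper_insert hc_not (ind m)]
  have hTsub : ({∅, {MycStarVertex.c'}, {MycStarVertex.u}} :
      Finset (Finset (MycStarVertex m)))
      ⊆ ((Vv m ∪ Vv' m) ∪ {MycStarVertex.c', MycStarVertex.u}).powerset := by
    intro t ht
    simp only [Finset.mem_insert, Finset.mem_singleton] at ht
    rcases ht with rfl | rfl | rfl
    · exact Finset.mem_powerset.2 (Finset.empty_subset _)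
    · exact Finset.mem_powerset.2 (by simp)
    · exact Finset.mem_powerset.2 (by simp)
  rw [← Finset.sum_subset hTsub (fun t ht htn => ?_)]
  · have hne : (∅ : Finset (MycStarVertex m)) ∉
        ({{MycStarVertex.c'}, {MycStarVertex.u}} : Finset (Finset (MycStarVertex m))) := by
      intro h
      rcases Finset.mem_insert.1 h with h | h
      · exact Finset.singleton_ne_empty _ h.symm
      · exact Finset.singleton_ne_empty _ ((Finset.mem_singleton.1 h).symm)
    rw [Finset.sum_insert hne, Finset.sum_insert (by simp), Finset.sum_singleton,
      termA, termB, termC]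
    have hAD : (∑ i ∈ Finset.range (m+1), m.choose i *
          ∑ j ∈ Finset.range (m+1), m.choose j * bell (2*m - i - j))
        = ∑ i ∈ Finset.range (m+1), ∑ j ∈ Finset.range (m+1),
            m.choose i * m.choose j * bell (2*m - i - j) := by
      refine Finset.sum_congr rfl fun i _ => ?_
      rw [Finset.mul_sum]
      exact Finset.sum_congr rfl fun j _ => (mul_assoc _ _ _).symm
    rw [hAD]
    omega
  · have h2 : ¬ ind m (insert MycStarVertex.c t) := by
      rw [ind_insert_c (Finset.mem_powerset.1 ht)]
      intro hor
      exact htn (by simp only [Finset.mem_insert, Finset.mem_singleton]; exact hor)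
    haveI : IsEmpty {Q : Finpartition
        (((Vv m ∪ Vv' m) ∪ {MycStarVertex.c', MycStarVertex.u}) \ t) //
        ind m (insert MycStarVertex.c t) ∧ ∀ q ∈ Q.parts, ind m q} := ⟨fun Q => h2 Q.2.1⟩
    exact Nat.card_of_isEmpty
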